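/- Let E : [R₀, ∞) → ℝ be a nondecreasing differentiable function with E(R₀) > 0, let θ ∈ (0,1), and suppose there exists C > 0 such that E(R) ≤ C (R · ln R · E′(R))^θ for all R ≥ R₀ > e. Then E cannot be bounded, i.e. this situation leads to a contradiction: in fact ∫_{R₀}^{R} dρ/(ρ ln ρ) ≤ C′ E(R₀)^{−(1−θ)/θ} for all R ≥ R₀, contradicting the divergence of ∫ dρ/(ρ ln ρ) = ln ln R − ln ln R₀ → ∞. -/

import Mathlib

/-- Differential inequality argument: there is no nondecreasing differentiable
`E : [R₀, ∞) → ℝ` with `E(R₀) > 0`, `R₀ > e`, satisfying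
`E(R) ≤ C (R ln R E'(R))^θ` for all `R ≥ R₀`, where `θ ∈ (0,1)` and `C > 0`. -/
theorem no_sublogarithmic_growth (E E' : ℝ → ℝ) (R₀ θ C : ℝ)
    (hR₀ : Real.exp 1 < R₀)
    (hmono : MonotoneOn E (Set.Ici R₀))
    (hderiv : ∀ R ∈ Set.Ici R₀, HasDerivAt E (E' R) R)
    (hpos : 0 < E R₀)
    (hθ0 : 0 < θ) (hθ1 : θ < 1) (hC : 0 < C)
    (hineq : ∀ R ∈ Set.Ici R₀, E R ≤ C * (R * Real.log R * E' R) ^ θ) :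
    False := by
  have hR₀1 : (1:ℝ) < R₀ := lt_trans (Real.one_lt_exp_iff.mpr one_pos) hR₀
  have hR₀0 : (0:ℝ) < R₀ := lt_trans one_pos hR₀1
  -- basic facts on [R₀, ∞)
  have hEpos : ∀ R ∈ Set.Ici R₀, 0 < E R := fun R hR =>
    lt_of_lt_of_le hpos (hmono (Set.self_mem_Ici) hR hR)
  have hlogpos : ∀ R ∈ Set.Ici R₀, 1 < Real.log R := by
    intro R hR
    have : Real.exp 1 < R := lt_of_lt_of_le hR₀ hR
    calc (1:ℝ) = Real.log (Real.exp 1) := (Real.log_exp 1).symm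
    _ < Real.log R := Real.log_lt_log (Real.exp_pos 1) this
  -- derivative is nonneg on the interior
  have hE'nonneg : ∀ x, R₀ < x → 0 ≤ E' x := by
    intro x hx
    have hd := (hderiv x (le_of_lt hx))
    have ht : Filter.Tendsto (slope E x) (nhdsWithin x {x}ᶜ) (nhds (E' x)) :=
      hasDerivAt_iff_tendsto_slope.mp hd
    refine ge_of_tendsto ht ?_
    have hmem : ∀ᶠ y in nhds x, y ∈ Set.Ioi R₀ := isOpen_Ioi.eventually_mem hx
    filter_upwards [eventually_nhdsWithin_of_eventually_nhds hmem, self_mem_nhdsWithin]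
      with y hy hyne
    have hy' : R₀ ≤ y := le_of_lt hy
    rcases lt_or_gt_of_ne (show y ≠ x from hyne) with h | h
    · rw [slope_def_field]
      have hnum : E y - E x ≤ 0 := sub_nonpos.mpr (hmono hy' (le_of_lt hx) (le_of_lt h))
      have hden : y - x < 0 := sub_neg.mpr h
      rw [show E y - E x = -(E x - E y) by ring, show y - x = -(x - y) by ring,
        neg_div_neg_eq]
      exact div_nonneg (by linarith) (by linarith)
    · rw [slope_def_field]
      have hnum : 0 ≤ E y - E x := sub_nonneg.mpr (hmono (le_of_lt hx) hy' (le_of_lt h))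
      exact div_nonneg hnum (le_of_lt (sub_pos.mpr h))
  -- key pointwise inequality
  have key : ∀ x, R₀ < x → (E x) ^ (1/θ) ≤ C ^ (1/θ) * (x * Real.log x * E' x) := by
    intro x hx
    have hxI : x ∈ Set.Ici R₀ := le_of_lt hx
    have hEx := hEpos x hxI
    have hlx := hlogpos x hxI
    have hx0 : (0:ℝ) < x := lt_trans hR₀0 hx
    set X := x * Real.log x * E' x with hX
    have hX0 : 0 ≤ X := by
      have : 0 ≤ x * Real.log x := le_of_lt (mul_pos hx0 (lt_trans one_pos hlx))
      exact mul_nonneg this (hE'nonneg x hx)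
    have h1 : E x / C ≤ X ^ θ := (div_le_iff₀' hC).mpr (hineq x hxI)
    have hXpos : 0 < X ^ θ := lt_of_lt_of_le (div_pos hEx hC) h1
    have h2 : (E x / C) ^ (1/θ) ≤ (X ^ θ) ^ (1/θ) :=
      Real.rpow_le_rpow (le_of_lt (div_pos hEx hC)) h1 (by positivity)
    have h3 : (X ^ θ) ^ (1/θ) = X := by
      rw [← Real.rpow_mul hX0, mul_one_div_cancel (ne_of_gt hθ0), Real.rpow_one]
    have h4 : (E x / C) ^ (1/θ) = (E x) ^ (1/θ) / C ^ (1/θ) :=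
      Real.div_rpow (le_of_lt hEx) (le_of_lt hC) (1/θ)
    rw [h3, h4] at h2
    calc (E x) ^ (1/θ) = (E x) ^ (1/θ) / C ^ (1/θ) * C ^ (1/θ) := by
          field_simp
    _ ≤ X * C ^ (1/θ) := by
          apply mul_le_mul_of_nonneg_right h2 (by positivity)
    _ = C ^ (1/θ) * X := mul_comm _ _
  -- the Lyapunov function
  set α : ℝ := (1 - θ)/θ with hα
  have hα0 : 0 < α := div_pos (by linarith) hθ0
  set K : ℝ := α / C ^ (1/θ) with hK
  have hK0 : 0 < K := div_pos hα0 (by positivity)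
  set f : ℝ → ℝ := fun R => K * Real.log (Real.log R) + (E R) ^ (-α) with hf
  -- derivative of f
  have hfderiv : ∀ x, R₀ < x →
      HasDerivAt f (K * (x⁻¹ / Real.log x) + E' x * (-α) * (E x) ^ (-α - 1)) x := by
    intro x hx
    have hxI : x ∈ Set.Ici R₀ := le_of_lt hx
    have hx0 : (0:ℝ) < x := lt_trans hR₀0 hx
    have hlx : (1:ℝ) < Real.log x := hlogpos x hxI
    have h1 : HasDerivAt (fun R => Real.log (Real.log R)) (x⁻¹ / Real.log x) x :=
      (Real.hasDerivAt_log (ne_of_gt hx0)).log (by linarith)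
    have h2 : HasDerivAt (fun R => (E R) ^ (-α)) (E' x * (-α) * (E x) ^ (-α - 1)) x :=
      (hderiv x hxI).rpow_const (Or.inl (ne_of_gt (hEpos x hxI)))
    exact (h1.const_mul K).add h2
  -- the derivative is nonpositive
  have hnonpos : ∀ x, R₀ < x →
      K * (x⁻¹ / Real.log x) + E' x * (-α) * (E x) ^ (-α - 1) ≤ 0 := by
    intro x hx
    have hxI : x ∈ Set.Ici R₀ := le_of_lt hx
    have hEx := hEpos x hxI
    have hlx : (1:ℝ) < Real.log x := hlogpos x hxI
    have hlx0 : (0:ℝ) < Real.log x := lt_trans one_pos hlx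
    have hx0 : (0:ℝ) < x := lt_trans hR₀0 hx
    have hexp : -α - 1 = -(1/θ) := by rw [hα]; field_simp; ring
    have hEinv : (E x) ^ (-α - 1) = ((E x) ^ (1/θ))⁻¹ := by
      rw [hexp, Real.rpow_neg (le_of_lt hEx)]
    set P := (E x) ^ (1/θ) with hP
    have hP0 : 0 < P := Real.rpow_pos_of_pos hEx _
    set D := C ^ (1/θ) with hD
    have hD0 : 0 < D := Real.rpow_pos_of_pos hC _
    have hkey : P ≤ D * (x * Real.log x * E' x) := key x hx
    rw [hEinv]
    have hQ0 : 0 < x * Real.log x := mul_pos hx0 hlx0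
    have hrw : K * (x⁻¹ / Real.log x) = α / (D * (x * Real.log x)) := by
      rw [hK]; field_simp
    have hrw2 : E' x * (-α) * P⁻¹ = -(α * E' x / P) := by
      rw [div_eq_mul_inv]; ring
    rw [hrw, hrw2]
    have hmain : α / (D * (x * Real.log x)) ≤ α * E' x / P := by
      rw [div_le_div_iff₀ (by positivity) hP0]
      nlinarith [hE'nonneg x hx]
    linarith
  -- antitone
  have hcont : ContinuousOn f (Set.Ici R₀) := by
    intro x hx
    have hx0 : (0:ℝ) < x := lt_of_lt_of_le hR₀0 hx
    have hlx : (1:ℝ) < Real.log x := hlogpos x hx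
    have h1 : ContinuousAt (fun R => Real.log (Real.log R)) x :=
      (Real.continuousAt_log (by linarith)).comp (Real.continuousAt_log (ne_of_gt hx0))
    have h2 : ContinuousAt (fun R => (E R) ^ (-α)) x :=
      ((hderiv x hx).continuousAt).rpow_const (Or.inl (ne_of_gt (hEpos x hx)))
    exact ((continuousAt_const.mul h1).add h2).continuousWithinAt
  have hant : AntitoneOn f (Set.Ici R₀) := by
    apply antitoneOn_of_deriv_nonpos (convex_Ici R₀) hcont
    · intro x hx
      rw [interior_Ici] at hx
      exact (hfderiv x hx).differentiableAt.differentiableWithinAt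
    · intro x hx
      rw [interior_Ici] at hx
      rw [(hfderiv x hx).deriv]
      exact hnonpos x hx
  -- f bounded below by K * log log R, contradiction for large R
  have hbound : ∀ R, R₀ ≤ R → K * Real.log (Real.log R) ≤ f R₀ := by
    intro R hR
    have h1 : f R ≤ f R₀ := hant Set.self_mem_Ici hR hR
    have h2 : 0 < (E R) ^ (-α) := Real.rpow_pos_of_pos (hEpos R hR) _
    simp only [hf] at h1 ⊢
    linarith
  set B := f R₀ / K + 1 with hB
  set R := max R₀ (Real.exp (Real.exp B)) with hR
  have hRge : R₀ ≤ R := le_max_left _ _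
  have hR0 : 0 < R := lt_of_lt_of_le hR₀0 hRge
  have h1 : Real.exp B ≤ Real.log R :=
    (Real.le_log_iff_exp_le hR0).mpr (le_max_right _ _)
  have hlogR0 : 0 < Real.log R := lt_of_lt_of_le (Real.exp_pos B) h1
  have h2 : B ≤ Real.log (Real.log R) :=
    (Real.le_log_iff_exp_le hlogR0).mpr h1
  have h3 := hbound R hRge
  have h4 : Real.log (Real.log R) ≤ f R₀ / K := (le_div_iff₀' hK0).mpr h3
  rw [hB] at h2
  linarith
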